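/- Let n > 0, E ∈ ℝ, k ∈ ℝ, K > 0, and let P, u : ℝ → ℝ with u twice differentiable, u > 0, satisfying u''(x) + (E − P(x)) u(x) = −(n k/2) u(x)^((4−n)/n) for all x. Let σ be differentiable on an open interval I with σ'(t) = u(σ(t)). Define W(x) = (12/(K² n²)) u'(x)² − (2/(K² n)) u(x)² P(x) + (12 E/(K² n²)) u(x)² + (3k/K²) u(x)^(4/n), a(t) = u(σ(t))^(−2/n), H(t) = a'(t)/a(t), and D = −12E/(n² K²). Then for all t ∈ I: W(σ(t)) = (3/K²)(H(t)² + H'(t)/3 + 2k/(3 a(t)²)) + (n−6) D/(6 a(t)^n). -/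

import Mathlib

/-- Equation (3.5) of Theorem 1 along the trajectory: the
expression W defining the potential V satisfies
W(σ(t)) = (3/K²)(H² + H'/3 + 2k/(3a²)) + (n−6)D/(6aⁿ). -/
theorem potential_expression_along_trajectory
    (n E k K : ℝ) (hn : 0 < n) (hK : 0 < K) (P u : ℝ → ℝ)
    (hu : Differentiable ℝ u) (hu' : Differentiable ℝ (deriv u))
    (hupos : ∀ x, 0 < u x)
    (hSchr : ∀ x, deriv (deriv u) x + (E - P x) * u x
      = -(n * k / 2) * u x ^ ((4 - n) / n))
    (t₁ t₂ : ℝ) (σ : ℝ → ℝ)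
    (hσ : ∀ t ∈ Set.Ioo t₁ t₂, DifferentiableAt ℝ σ t)
    (hσ' : ∀ t ∈ Set.Ioo t₁ t₂, deriv σ t = u (σ t))
    (W a H : ℝ → ℝ) (D : ℝ)
    (hW : W = fun x => 12 / (K ^ 2 * n ^ 2) * (deriv u x) ^ 2
      - 2 / (K ^ 2 * n) * u x ^ 2 * P x
      + 12 * E / (K ^ 2 * n ^ 2) * u x ^ 2
      + 3 * k / K ^ 2 * u x ^ (4 / n))
    (ha : a = fun t => u (σ t) ^ (-2 / n))
    (hH : H = fun t => deriv a t / a t)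
    (hD : D = -12 * E / (n ^ 2 * K ^ 2)) :
    ∀ t ∈ Set.Ioo t₁ t₂,
      W (σ t) = 3 / K ^ 2 * (H t ^ 2 + deriv H t / 3 + 2 * k / (3 * a t ^ 2))
        + (n - 6) * D / (6 * a t ^ n) := by
  have hn0 : n ≠ 0 := ne_of_gt hn
  have hK0 : K ≠ 0 := ne_of_gt hK
  have hσd : ∀ t ∈ Set.Ioo t₁ t₂, HasDerivAt σ (u (σ t)) t := by
    intro t ht
    have := (hσ t ht).hasDerivAt
    rwa [hσ' t ht] at this
  have hHeq : ∀ t ∈ Set.Ioo t₁ t₂, H t = -2 / n * deriv u (σ t) := by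
    intro t ht
    have hpos := hupos (σ t)
    have hderiv_a : HasDerivAt a
        (deriv u (σ t) * u (σ t) * (-2 / n) * u (σ t) ^ (-2 / n - 1)) t := by
      rw [ha]
      exact ((hu.differentiableAt.hasDerivAt.comp t (hσd t ht)).rpow_const
        (Or.inl (ne_of_gt hpos)))
    have hcomb : u (σ t) * u (σ t) ^ (-2 / n - 1) = u (σ t) ^ (-2 / n) := by
      nth_rewrite 1 [← Real.rpow_one (u (σ t))]
      rw [← Real.rpow_add hpos]
      congr 1
      ring
    have haval' : a t = u (σ t) ^ (-2 / n) := by rw [ha]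
    have hane : u (σ t) ^ (-2 / n) ≠ 0 := ne_of_gt (Real.rpow_pos_of_pos hpos _)
    rw [hH]
    simp only [hderiv_a.deriv, haval']
    rw [show deriv u (σ t) * u (σ t) * (-2 / n) * u (σ t) ^ (-2 / n - 1)
        = (-2 / n * deriv u (σ t)) * (u (σ t) * u (σ t) ^ (-2 / n - 1)) by ring,
      hcomb, mul_div_assoc, div_self hane, mul_one]
  intro t ht
  have hpos := hupos (σ t)
  have hHd : deriv H t = -2 / n * (deriv (deriv u) (σ t) * u (σ t)) := by
    have hev : H =ᶠ[nhds t] fun s => -2 / n * deriv u (σ s) := by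
      filter_upwards [isOpen_Ioo.mem_nhds ht] with s hs using hHeq s hs
    rw [hev.deriv_eq]
    exact (((hu'.differentiableAt.hasDerivAt.comp t (hσd t ht))).const_mul
      (-2 / n)).deriv
  set U := u (σ t) with hU
  set U' := deriv u (σ t) with hU'
  set U'' := deriv (deriv u) (σ t) with hU''
  have hSchrt : U'' + (E - P (σ t)) * U = -(n * k / 2) * U ^ ((4 - n) / n) :=
    hSchr (σ t)
  have haval : a t = U ^ (-2 / n) := by rw [ha]
  have ha2 : a t ^ 2 = U ^ (-4 / n) := by
    rw [haval, ← Real.rpow_natCast (U ^ (-2 / n)) 2, ← Real.rpow_mul hpos.le]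
    congr 1
    push_cast
    ring
  have han : a t ^ n = U ^ (-2 : ℝ) := by
    rw [haval, ← Real.rpow_mul hpos.le, div_mul_cancel₀ _ hn0]
  have hUm2 : U ^ (-2 : ℝ) = (U ^ 2)⁻¹ := by
    rw [Real.rpow_neg hpos.le, Real.rpow_two]
  have hUm4n : U ^ (-4 / n) = (U ^ (4 / n))⁻¹ := by
    rw [neg_div, Real.rpow_neg hpos.le]
  have hUmul : U * U ^ ((4 - n) / n) = U ^ (4 / n) := by
    nth_rewrite 1 [← Real.rpow_one U]
    rw [← Real.rpow_add hpos]
    congr 1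
    field_simp
    ring
  have hA : (0:ℝ) < U ^ (4 / n) := Real.rpow_pos_of_pos hpos _
  have hU0 : U ≠ 0 := ne_of_gt hpos
  have h2 : 2 * k / (3 * a t ^ 2) = 2 * k * U ^ (4 / n) / 3 := by
    rw [ha2, hUm4n]
    field_simp
  have h6 : (n - 6) * D / (6 * a t ^ n)
      = (n - 6) * (-12 * E / (n ^ 2 * K ^ 2)) * U ^ 2 / 6 := by
    rw [han, hUm2, hD]
    field_simp
  have hSchr' : U'' = -(E - P (σ t)) * U - n * k / 2 * U ^ ((4 - n) / n) := by
    linarith [hSchrt]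
  rw [hW, hHeq t ht, hHd, h2, h6, hSchr']
  linear_combination (-(k / K ^ 2)) * hUmul
    + (2 * E * u (σ t) ^ 2 / (K ^ 2 * n)
      - k * u (σ t) * u (σ t) ^ ((4 - n) / n) / K ^ 2) * (mul_inv_cancel₀ hn0)
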